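/- Let R : [−1, 1] → [−1, 1] be a rational function of some type (p, q) on [−1, 1]. Then there exists a constant C > 0, depending only on R, such that for every 0 < ε < 1 there exists a ReLU neural network f : [−1, 1] → [−1, 1] of size at most C·(1 + log(1/ε))³ satisfying max_{x ∈ [−1,1]} |R(x) − f(x)| ≤ ε. -/

import Mathlib

open Real Set

/-- ReLU activation. -/
def ReLU (x : ℝ) : ℝ := max x 0

/-- `f` is a rational function of type `(p, q)` on the set `I`:
`f = P/Q` with `deg P ≤ p`, `deg Q ≤ q` and `Q` has no zeros on `I`. -/
def IsRationalOn (f : ℝ → ℝ) (p q : ℕ) (I : Set ℝ) : Prop :=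
  ∃ P Q : Polynomial ℝ, P.natDegree ≤ p ∧ Q.natDegree ≤ q ∧
    (∀ x ∈ I, Q.eval x ≠ 0) ∧ ∀ x ∈ I, f x = P.eval x / Q.eval x

/-- Dot product of two lists of reals. -/
def listDot (u v : List ℝ) : ℝ := ((u.zip v).map fun p => p.1 * p.2).sum

/-- A neuron: an activation function, a vector of weights and a bias. -/
structure Neuron where
  σ : ℝ → ℝ
  a : List ℝ
  b : ℝ

/-- Output of a neuron given the previous layer `y`: `σ(aᵀy + b)`. -/
def Neuron.eval (n : Neuron) (y : List ℝ) : ℝ := n.σ (listDot n.a y + n.b)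

/-- A feed-forward neural network with input dimension `d`: a list of layers
followed by a linear read-out `x ↦ wᵀ y_M + c`. -/
structure NeuralNet (d : ℕ) where
  layers : List (List Neuron)
  w : List ℝ
  c : ℝ

/-- Evaluation of a neural network. -/
def NeuralNet.eval {d : ℕ} (N : NeuralNet d) (x : Fin d → ℝ) : ℝ :=
  listDot N.w (N.layers.foldl (fun y layer => layer.map (fun n => n.eval y)) (List.ofFn x)) + N.c

/-- The size of a neural network: total number of nodes. -/
def NeuralNet.size {d : ℕ} (N : NeuralNet d) : ℕ := (N.layers.map List.length).sum

/-- The depth of a neural network: number of layers. -/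
def NeuralNet.depth {d : ℕ} (N : NeuralNet d) : ℕ := N.layers.length

/-- A ReLU network: every activation function is `ReLU`. -/
def NeuralNet.IsReLU {d : ℕ} (N : NeuralNet d) : Prop :=
  ∀ layer ∈ N.layers, ∀ n ∈ layer, n.σ = ReLU

/-- A rational network: every activation function is a rational function. -/
def NeuralNet.IsRational {d : ℕ} (N : NeuralNet d) : Prop :=
  ∀ layer ∈ N.layers, ∀ n ∈ layer, ∃ p q : ℕ, IsRationalOn n.σ p q Set.univ


-- ## Auxiliary development
open Polynomial Finset

lemma ReLU_of_nonneg {x : ℝ} (h : 0 ≤ x) : ReLU x = x := max_eq_left h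
lemma ReLU_nonneg (x : ℝ) : 0 ≤ ReLU x := le_max_right _ _

/-- the tent map, written with ReLU. -/
noncomputable def tent (t : ℝ) : ℝ := 2 * ReLU t - 4 * ReLU (t - 1/2)

lemma tent_mem {t : ℝ} (h : t ∈ Icc (0:ℝ) 1) : tent t ∈ Icc (0:ℝ) 1 := by
  obtain ⟨h0, h1⟩ := h
  rcases le_or_gt t (1/2) with hc | hc
  · have : ReLU (t - 1/2) = 0 := by
      simp [ReLU, max_eq_right]; linarith
    simp [tent, this, ReLU_of_nonneg h0]
    constructor <;> linarith
  · have h2 : ReLU (t - 1/2) = t - 1/2 := ReLU_of_nonneg (by linarith)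
    simp [tent, h2, ReLU_of_nonneg h0]
    constructor <;> linarith

lemma tent_key {t : ℝ} (h : t ∈ Icc (0:ℝ) 1) :
    4 * (t * (1 - t)) = tent t * (2 - tent t) := by
  obtain ⟨h0, h1⟩ := h
  rcases le_or_gt t (1/2) with hc | hc
  · have h2 : ReLU (t - 1/2) = 0 := by
      simp only [ReLU]; apply max_eq_right; linarith
    rw [tent, h2, ReLU_of_nonneg h0]; ring
  · have h2 : ReLU (t - 1/2) = t - 1/2 := ReLU_of_nonneg (by linarith)
    rw [tent, h2, ReLU_of_nonneg h0]; ring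

noncomputable def tentIter : ℕ → ℝ → ℝ
  | 0, t => t
  | (k+1), t => tent (tentIter k t)

lemma tentIter_mem {t : ℝ} (h : t ∈ Icc (0:ℝ) 1) (k : ℕ) : tentIter k t ∈ Icc (0:ℝ) 1 := by
  induction k with
  | zero => exact h
  | succ k ih => exact tent_mem ih

/-- partial Yarotsky sum -/
noncomputable def ysum (n : ℕ) (t : ℝ) : ℝ :=
  ∑ k ∈ Finset.range n, (4:ℝ)⁻¹ ^ (k+1) * tentIter (k+1) t

lemma yarotsky {t : ℝ} (h : t ∈ Icc (0:ℝ) 1) (n : ℕ) :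
    t - ysum n t = t^2 + (4:ℝ)⁻¹ ^ n * (tentIter n t * (1 - tentIter n t)) := by
  induction n with
  | zero => simp [ysum, tentIter]; ring
  | succ n ih =>
    have hs : ysum (n+1) t = ysum n t + (4:ℝ)⁻¹ ^ (n+1) * tentIter (n+1) t := by
      simp [ysum, Finset.sum_range_succ]
    have hu := tentIter_mem h n
    have hkey := tent_key hu
    have : tentIter (n+1) t = tent (tentIter n t) := rfl
    rw [hs]
    have : t - (ysum n t + (4:ℝ)⁻¹ ^ (n+1) * tentIter (n+1) t)
        = (t - ysum n t) - (4:ℝ)⁻¹ ^ (n+1) * tent (tentIter n t) := by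
      rw [this]; ring
    rw [this, ih]
    have h4 : ((4:ℝ)⁻¹ : ℝ) ^ (n+1) = (4:ℝ)⁻¹^n * 4⁻¹ := by ring
    rw [show tentIter (n+1) t = tent (tentIter n t) from rfl]
    rw [h4]
    linear_combination ((4:ℝ)⁻¹^n * 4⁻¹) * hkey

noncomputable def l1 (P : Polynomial ℝ) : ℝ := ∑ i ∈ Finset.range (P.natDegree + 1), |P.coeff i|

lemma l1_nonneg (P : Polynomial ℝ) : 0 ≤ l1 P :=
  Finset.sum_nonneg fun _ _ => abs_nonneg _

lemma l1_eq_large (P : Polynomial ℝ) {N : ℕ} (h : P.natDegree < N) :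
    l1 P = ∑ i ∈ Finset.range N, |P.coeff i| := by
  apply Finset.sum_subset
  · intro i hi; simp only [Finset.mem_range] at *; omega
  · intro i _ hi
    simp only [Finset.mem_range, not_lt] at hi
    rw [P.coeff_eq_zero_of_natDegree_lt (by omega), abs_zero]

lemma abs_eval_le_l1 (P : Polynomial ℝ) {x : ℝ} (hx : |x| ≤ 1) : |P.eval x| ≤ l1 P := by
  rw [P.eval_eq_sum_range]
  refine (Finset.abs_sum_le_sum_abs _ _).trans ?_
  apply Finset.sum_le_sum
  intro i _
  rw [abs_mul, abs_pow]
  calc |P.coeff i| * |x| ^ i ≤ |P.coeff i| * 1 := by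
        apply mul_le_mul_of_nonneg_left _ (abs_nonneg _)
        exact pow_le_one₀ (abs_nonneg _) hx
    _ = |P.coeff i| := mul_one _

lemma l1_mul_le (P Q : Polynomial ℝ) : l1 (P * Q) ≤ l1 P * l1 Q := by
  set N := P.natDegree + Q.natDegree + 1 with hN
  have hdeg : (P * Q).natDegree < N := Nat.lt_succ_of_le (natDegree_mul_le)
  rw [l1_eq_large _ hdeg]
  have step1 : ∑ n ∈ Finset.range N, |(P * Q).coeff n|
      ≤ ∑ n ∈ Finset.range N, ∑ ij ∈ Finset.HasAntidiagonal.antidiagonal n, |P.coeff ij.1| * |Q.coeff ij.2| := by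
    apply Finset.sum_le_sum
    intro n _
    rw [Polynomial.coeff_mul]
    refine (Finset.abs_sum_le_sum_abs _ _).trans ?_
    apply Finset.sum_le_sum
    intro ij _
    rw [abs_mul]
  refine step1.trans ?_
  have hdisj : (↑(Finset.range N) : Set ℕ).PairwiseDisjoint (fun n => Finset.HasAntidiagonal.antidiagonal n) := by
    intro a _ b _ hab
    simp only [Function.onFun, Finset.disjoint_left]
    intro ij hia hib
    rw [Finset.HasAntidiagonal.mem_antidiagonal] at hia hib
    exact hab (hia ▸ hib)
  rw [← Finset.sum_biUnion hdisj]
  have hsub : (Finset.range N).biUnion (fun n => Finset.HasAntidiagonal.antidiagonal n)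
      ⊆ Finset.range N ×ˢ Finset.range N := by
    intro ij hij
    simp only [Finset.mem_biUnion] at hij
    obtain ⟨n, hn, hij⟩ := hij
    rw [Finset.HasAntidiagonal.mem_antidiagonal] at hij
    rw [Finset.mem_range] at hn
    simp only [Finset.mem_product, Finset.mem_range]
    omega
  have := Finset.sum_le_sum_of_subset_of_nonneg
    (f := fun ij : ℕ × ℕ => |P.coeff ij.1| * |Q.coeff ij.2|) hsub (fun ij _ _ => by positivity)
  refine this.trans ?_
  rw [Finset.sum_product]
  rw [l1_eq_large P (N:=N) (by omega), l1_eq_large Q (N:=N) (by omega), Finset.sum_mul]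
  apply le_of_eq
  congr 1
  ext i
  rw [Finset.mul_sum]

lemma l1_add_le (P Q : Polynomial ℝ) : l1 (P + Q) ≤ l1 P + l1 Q := by
  set N := max P.natDegree Q.natDegree + 1 with hN
  have h1 : (P + Q).natDegree < N := Nat.lt_succ_of_le ((natDegree_add_le P Q))
  rw [l1_eq_large _ h1, l1_eq_large P (N:=N) (by omega), l1_eq_large Q (N:=N) (by omega),
    ← Finset.sum_add_distrib]
  apply Finset.sum_le_sum
  intro i _
  rw [Polynomial.coeff_add]
  exact abs_add_le _ _

lemma l1_smul_le (c : ℝ) (P : Polynomial ℝ) : l1 (c • P) ≤ |c| * l1 P := by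
  have h1 : (c • P).natDegree < P.natDegree + 1 := Nat.lt_succ_of_le (natDegree_smul_le c P)
  rw [l1_eq_large _ h1, l1, Finset.mul_sum]
  apply Finset.sum_le_sum
  intro i _
  rw [Polynomial.coeff_smul, smul_eq_mul, abs_mul]

lemma l1_one : l1 (1 : Polynomial ℝ) = 1 := by
  simp [l1]

lemma l1_pow_le (P : Polynomial ℝ) (k : ℕ) : l1 (P ^ k) ≤ (max 1 (l1 P)) ^ k := by
  induction k with
  | zero => simp [l1_one]
  | succ k ih =>
    rw [pow_succ, pow_succ]
    calc l1 (P ^ k * P) ≤ l1 (P ^ k) * l1 P := l1_mul_le _ _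
      _ ≤ (max 1 (l1 P)) ^ k * (max 1 (l1 P)) := by
          apply mul_le_mul ih (le_max_right _ _) (l1_nonneg _)
          positivity

lemma l1_sum_le {α : Type*} (s : Finset α) (f : α → Polynomial ℝ) :
    l1 (∑ k ∈ s, f k) ≤ ∑ k ∈ s, l1 (f k) := by
  classical
  induction s using Finset.induction_on with
  | empty => simp [l1]
  | insert _ _ h ih =>
    rw [Finset.sum_insert h, Finset.sum_insert h]
    exact (l1_add_le _ _).trans (by linarith)

/-- A rational function bounded-denominator reduction: positive denominator version. -/
lemma exists_pos_denom (p q : ℕ) (R : ℝ → ℝ)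
    (hR : IsRationalOn R p q (Set.Icc (-1) 1)) :
    ∃ P Q : Polynomial ℝ, P.natDegree ≤ p ∧ Q.natDegree ≤ q ∧
      (∀ x ∈ Set.Icc (-1:ℝ) 1, 0 < Q.eval x) ∧
      ∀ x ∈ Set.Icc (-1:ℝ) 1, R x = P.eval x / Q.eval x := by
  obtain ⟨P, Q, hP, hQ, hQ0, hRe⟩ := hR
  have hsign : (∀ x ∈ Set.Icc (-1:ℝ) 1, 0 < Q.eval x) ∨
      (∀ x ∈ Set.Icc (-1:ℝ) 1, Q.eval x < 0) := by
    by_contra hcon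
    push_neg at hcon
    obtain ⟨⟨x, hx, hxe⟩, ⟨y, hy, hye⟩⟩ := hcon
    have hxlt : Q.eval x < 0 := lt_of_le_of_ne hxe (hQ0 x hx)
    have hygt : 0 < Q.eval y := lt_of_le_of_ne hye (Ne.symm (hQ0 y hy))
    have hcont : ContinuousOn (fun z => Q.eval z) (Set.uIcc x y) :=
      (Polynomial.continuous Q).continuousOn
    have h0 : (0:ℝ) ∈ Set.uIcc (Q.eval x) (Q.eval y) := by
      rw [Set.mem_uIcc]; left; exact ⟨le_of_lt hxlt, le_of_lt hygt⟩
    obtain ⟨z, hz, hz0⟩ := intermediate_value_uIcc hcont h0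
    have hzI : z ∈ Set.Icc (-1:ℝ) 1 := by
      have : Set.uIcc x y ⊆ Set.Icc (-1:ℝ) 1 := by
        rw [Set.uIcc_eq_union]
        apply Set.union_subset <;> apply Set.Icc_subset_Icc
        · exact hx.1
        · exact hy.2
        · exact hy.1
        · exact hx.2
      exact this hz
    exact hQ0 z hzI hz0
  rcases hsign with h | h
  · exact ⟨P, Q, hP, hQ, h, hRe⟩
  · refine ⟨-P, -Q, (natDegree_neg P) ▸ hP, (natDegree_neg Q) ▸ hQ, ?_, ?_⟩
    · intro x hx; simp only [eval_neg]; linarith [h x hx]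
    · intro x hx; simp only [eval_neg, neg_div_neg_eq]; exact hRe x hx

lemma Karith {a b L x : ℝ} (ha : 0 < a) (hb : 0 ≤ b) (hL : 0 < L)
    (h1 : x ≤ a*(1+b+L)+1) : x ≤ (a*(1+b)+a+1)*(1+L) := by
  nlinarith [mul_nonneg (mul_nonneg ha.le (by linarith : (0:ℝ) ≤ 1+b)) hL.le,
    mul_nonneg ha.le hL.le]

lemma c2arith {κ lA lB L K : ℝ} (hκ : 0 < κ) (hlA : 0 ≤ lA) (hlB : 0 ≤ lB) (hL : 0 < L)
    (hKle : K ≤ κ*(1+L)) (hKA : K*lA ≤ κ*(1+L)*lA) :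
    lB + (K + K*lA) ≤ (lB + κ*(1+lA) + 1)*(1+L) := by
  nlinarith [mul_nonneg hlB hL.le, mul_nonneg (mul_nonneg hκ.le hlA) hL.le]

lemma degarith {pp qq κ L K : ℝ} (hp : 0 ≤ pp) (hq : 0 ≤ qq) (hκ : 0 < κ) (hL : 0 < L)
    (hqK : qq * K ≤ qq * (κ * (1 + L))) : pp + qq * K + 1 ≤ (pp + 1 + qq * κ) * (1 + L) := by
  nlinarith [mul_nonneg (by linarith : (0:ℝ) ≤ pp + 1) hL.le,
    mul_nonneg (mul_nonneg hq hκ.le) hL.le]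

set_option maxHeartbeats 2000000 in
lemma rat_to_poly (p q : ℕ) (R : ℝ → ℝ)
    (hR : IsRationalOn R p q (Set.Icc (-1) 1)) :
    ∃ c₁ c₂ : ℝ, 0 < c₁ ∧ 0 < c₂ ∧ ∀ ε : ℝ, 0 < ε → ε < 1 →
      ∃ g : Polynomial ℝ,
        (g.natDegree + 1 : ℝ) ≤ c₁ * (1 + Real.log (1/ε)) ∧
        l1 g ≤ Real.exp (c₂ * (1 + Real.log (1/ε))) ∧
        ∀ x ∈ Set.Icc (-1:ℝ) 1, |R x - g.eval x| ≤ ε / 2 := by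
  obtain ⟨P, Q, hP, hQ, hQpos, hRe⟩ := exists_pos_denom p q R hR
  -- min and max of Q, max of |P|
  have hIcomp : IsCompact (Set.Icc (-1:ℝ) 1) := isCompact_Icc
  have hIne : (Set.Icc (-1:ℝ) 1).Nonempty := ⟨0, by norm_num⟩
  obtain ⟨xm, hxm, hxmin⟩ := hIcomp.exists_isMinOn hIne (Polynomial.continuous Q).continuousOn
  obtain ⟨xM, hxM, hxmax⟩ := hIcomp.exists_isMaxOn hIne (Polynomial.continuous Q).continuousOn
  set m := Q.eval xm with hm
  set M := Q.eval xM with hM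
  have hm0 : 0 < m := hQpos xm hxm
  have hM0 : 0 < M := hQpos xM hxM
  have hmM : m ≤ M := hxmin hxM
  have hQle : ∀ x ∈ Set.Icc (-1:ℝ) 1, m ≤ Q.eval x ∧ Q.eval x ≤ M :=
    fun x hx => ⟨hxmin hx, hxmax hx⟩
  set Bp : ℝ := l1 P with hBp
  have hBp0 : 0 ≤ Bp := l1_nonneg P
  have hPle : ∀ x ∈ Set.Icc (-1:ℝ) 1, |P.eval x| ≤ Bp := by
    intro x hx
    exact abs_eval_le_l1 P (abs_le.mpr ⟨hx.1, hx.2⟩)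
  set θ : ℝ := 1 - m / M with hθ
  have hθ0 : 0 ≤ θ := by
    rw [hθ]; have := div_le_one_of_le₀ hmM (le_of_lt hM0); linarith
  set TT : Polynomial ℝ := 1 - M⁻¹ • Q with hTT
  have hTTeval : ∀ x, TT.eval x = 1 - Q.eval x / M := by
    intro x; simp [hTT, div_eq_inv_mul]
  have hTTmem : ∀ x ∈ Set.Icc (-1:ℝ) 1, TT.eval x ∈ Set.Icc 0 θ := by
    intro x hx
    rw [hTTeval]
    obtain ⟨h1, h2⟩ := hQle x hx
    constructor
    · have : Q.eval x / M ≤ 1 := div_le_one_of_le₀ h2 (le_of_lt hM0)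
      linarith
    · rw [hθ]
      have : m / M ≤ Q.eval x / M := by gcongr
      linarith
  have hθ1 : θ < 1 := by
    rw [hθ]
    have : 0 < m / M := div_pos hm0 hM0
    linarith
  -- constants
  set κ : ℝ := (M/m) * (1 + Real.log (Bp/m + 1)) + M/m + 1 with hκ
  have hlogB : 0 ≤ Real.log (Bp/m + 1) := by
    apply Real.log_nonneg
    have : 0 ≤ Bp / m := div_nonneg hBp0 (le_of_lt hm0)
    linarith
  have hMm : 0 < M / m := div_pos hM0 hm0
  have hκ0 : 0 < κ := by
    have : 0 ≤ (M/m) * (1 + Real.log (Bp/m + 1)) := by positivity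
    rw [hκ]; linarith
  set Amax : ℝ := max 1 (l1 TT) with hAmax
  have hAmax1 : 1 ≤ Amax := le_max_left _ _
  have hlogA : 0 ≤ Real.log Amax := Real.log_nonneg hAmax1
  set c₁ : ℝ := (p : ℝ) + 1 + q * κ with hc₁
  set c₂ : ℝ := Real.log (Bp * M⁻¹ + 1) + κ * (1 + Real.log Amax) + 1 with hc₂
  have hc₁0 : 0 < c₁ := by
    have : (0:ℝ) ≤ q * κ := by positivity
    rw [hc₁]; positivity
  have hlogBM : 0 ≤ Real.log (Bp * M⁻¹ + 1) := by
    apply Real.log_nonneg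
    have : 0 ≤ Bp * M⁻¹ := by positivity
    linarith
  have hc₂0 : 0 < c₂ := by
    have : 0 ≤ κ * (1 + Real.log Amax) := by positivity
    rw [hc₂]; linarith
  have hdTT : TT.natDegree ≤ q := by
    rw [hTT]
    refine (natDegree_sub_le _ _).trans ?_
    simp only [natDegree_one]
    refine max_le (by omega) ?_
    exact (natDegree_smul_le _ _).trans hQ
  clear_value m M Bp θ TT Amax
  refine ⟨c₁, c₂, hc₁0, hc₂0, ?_⟩
  intro ε hε0 hε1
  set L : ℝ := Real.log (1/ε) with hL
  have hL0 : 0 < L := by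
    rw [hL]; apply Real.log_pos
    rw [one_div]
    exact (one_lt_inv₀ hε0).mpr hε1
  obtain ⟨K, hK1, hKge, hKle⟩ :
      ∃ K : ℕ, 1 ≤ K ∧ (M/m) * (1 + Real.log (Bp/m + 1) + L) ≤ (K : ℝ) ∧
        (K : ℝ) ≤ κ * (1 + L) := by
    refine ⟨⌈(M/m) * (1 + Real.log (Bp/m + 1) + L)⌉₊, ?_, Nat.le_ceil _, ?_⟩
    · have hargpos : 0 < (M/m) * (1 + Real.log (Bp/m + 1) + L) := by positivity
      exact Nat.one_le_iff_ne_zero.mpr (by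
        intro hc
        rw [Nat.ceil_eq_zero] at hc
        linarith)
    · have hargpos : 0 ≤ (M/m) * (1 + Real.log (Bp/m + 1) + L) := by positivity
      have h1 : ((⌈(M/m) * (1 + Real.log (Bp/m + 1) + L)⌉₊ : ℝ)) ≤
          (M/m) * (1 + Real.log (Bp/m + 1) + L) + 1 := (Nat.ceil_lt_add_one hargpos).le
      rw [hκ]
      exact Karith hMm hlogB hL0 h1
  clear_value κ c₁ c₂ L
  refine ⟨P * (M⁻¹ • ∑ k ∈ Finset.range K, TT ^ k), ?_, ?_, ?_⟩
  · -- degree bound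
    have hdsum : (∑ k ∈ Finset.range K, TT ^ k).natDegree ≤ q * K := by
      apply natDegree_sum_le_of_forall_le
      intro k hk
      refine (natDegree_pow_le).trans ?_
      rw [Finset.mem_range] at hk
      calc k * TT.natDegree ≤ k * q := Nat.mul_le_mul_left k hdTT
        _ ≤ q * K := by rw [Nat.mul_comm]; exact Nat.mul_le_mul_left q (le_of_lt hk)
    have hdg : (P * (M⁻¹ • ∑ k ∈ Finset.range K, TT ^ k)).natDegree ≤ p + q * K := by
      refine (natDegree_mul_le).trans ?_
      have := (natDegree_smul_le (M⁻¹) (∑ k ∈ Finset.range K, TT ^ k)).trans hdsum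
      omega
    have h2 : ((P * (M⁻¹ • ∑ k ∈ Finset.range K, TT ^ k)).natDegree + 1 : ℝ)
        ≤ (p : ℝ) + q * K + 1 := by
      push_cast
      have : ((P * (M⁻¹ • ∑ k ∈ Finset.range K, TT ^ k)).natDegree : ℝ) ≤ (p : ℝ) + q * K := by
        exact_mod_cast hdg
      linarith
    refine h2.trans ?_
    rw [hc₁]
    have hqK : (q : ℝ) * K ≤ q * (κ * (1 + L)) :=
      mul_le_mul_of_nonneg_left hKle (Nat.cast_nonneg q)
    exact degarith (Nat.cast_nonneg p) (Nat.cast_nonneg q) hκ0 hL0 hqK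
  · -- l1 bound
    have h1 : l1 (P * (M⁻¹ • ∑ k ∈ Finset.range K, TT ^ k)) ≤ Bp * (M⁻¹ * (K * Amax ^ K)) := by
      refine (l1_mul_le _ _).trans ?_
      rw [← hBp]
      apply mul_le_mul_of_nonneg_left _ hBp0
      refine (l1_smul_le _ _).trans ?_
      rw [abs_of_pos (by positivity : (0:ℝ) < M⁻¹)]
      apply mul_le_mul_of_nonneg_left _ (by positivity : (0:ℝ) ≤ M⁻¹)
      refine (l1_sum_le _ _).trans ?_
      calc ∑ k ∈ Finset.range K, l1 (TT ^ k) ≤ ∑ k ∈ Finset.range K, Amax ^ k := by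
            apply Finset.sum_le_sum
            intro k _
            rw [hAmax]
            exact l1_pow_le TT k
        _ ≤ ∑ _k ∈ Finset.range K, Amax ^ K := by
            apply Finset.sum_le_sum
            intro k hk
            apply pow_le_pow_right₀ hAmax1 (le_of_lt (Finset.mem_range.mp hk))
        _ = K * Amax ^ K := by rw [Finset.sum_const, Finset.card_range, nsmul_eq_mul]
    refine h1.trans ?_
    have hA : (0:ℝ) < Amax := lt_of_lt_of_le one_pos hAmax1
    have h2 : Bp * (M⁻¹ * (K * Amax ^ K)) ≤ (Bp * M⁻¹ + 1) * ((K:ℝ) * Amax ^ K) := by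
      have hKpos : (0:ℝ) < K := by exact_mod_cast hK1
      have : (0:ℝ) ≤ (K:ℝ) * Amax ^ K := by positivity
      nlinarith [this]
    refine h2.trans ?_
    have e1 : Bp * M⁻¹ + 1 = Real.exp (Real.log (Bp * M⁻¹ + 1)) := by
      rw [Real.exp_log (by positivity)]
    have e2 : (K : ℝ) ≤ Real.exp K := by
      have := Real.add_one_le_exp (K : ℝ)
      linarith
    have e3 : Amax ^ K = Real.exp (K * Real.log Amax) := by
      rw [← Real.exp_log hA, ← Real.exp_nat_mul, Real.exp_log hA]
    rw [e1, e3]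
    calc Real.exp (Real.log (Bp * M⁻¹ + 1)) * ((K:ℝ) * Real.exp (K * Real.log Amax))
        ≤ Real.exp (Real.log (Bp * M⁻¹ + 1)) * (Real.exp K * Real.exp (K * Real.log Amax)) := by
          apply mul_le_mul_of_nonneg_left _ (le_of_lt (Real.exp_pos _))
          apply mul_le_mul_of_nonneg_right e2 (le_of_lt (Real.exp_pos _))
      _ = Real.exp (Real.log (Bp * M⁻¹ + 1) + (K + K * Real.log Amax)) := by
          rw [← Real.exp_add, ← Real.exp_add]
      _ ≤ Real.exp (c₂ * (1 + L)) := by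
          apply Real.exp_le_exp.mpr
          rw [hc₂]
          have hKA : (K:ℝ) * Real.log Amax ≤ κ * (1 + L) * Real.log Amax :=
            mul_le_mul_of_nonneg_right hKle hlogA
          exact c2arith hκ0 hlogA hlogBM hL0 hKle hKA
  · -- approximation bound
    intro x hx
    have hQx := hQle x hx
    have hQx0 : 0 < Q.eval x := lt_of_lt_of_le hm0 hQx.1
    set t : ℝ := TT.eval x with ht
    have htmem := hTTmem x hx
    have ht1 : t ≠ 1 := by
      rw [ht, hTTeval]
      intro hc
      have : Q.eval x / M = 0 := by linarith
      rw [_root_.div_eq_zero_iff] at this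
      rcases this with h | h
      · exact absurd h (ne_of_gt hQx0)
      · exact absurd h (ne_of_gt hM0)
    have hgeval : (P * (M⁻¹ • ∑ k ∈ Finset.range K, TT ^ k)).eval x
        = P.eval x * (M⁻¹ * ((1 - t^K) / (1 - t))) := by
      simp only [eval_mul, eval_smul, eval_finset_sum, eval_pow, smul_eq_mul]
      congr 2
      rw [geom_sum_eq ht1]
      rw [div_eq_div_iff (by intro hc; exact ht1 (by linarith)) (by intro hc; exact ht1 (by linarith))]
      ring
    have h1t : 1 - t = Q.eval x / M := by rw [ht, hTTeval]; ring
    have hdiff : R x - (P * (M⁻¹ • ∑ k ∈ Finset.range K, TT ^ k)).eval x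
        = P.eval x / Q.eval x * t ^ K := by
      rw [hRe x hx, hgeval, h1t]
      field_simp
      ring
    rw [hdiff, abs_mul, abs_div]
    have htK : |t ^ K| ≤ θ ^ K := by
      rw [abs_pow, abs_of_nonneg htmem.1]
      exact pow_le_pow_left₀ htmem.1 htmem.2 K
    have hPb := hPle x hx
    have hQb : m ≤ |Q.eval x| := by rw [abs_of_pos hQx0]; exact hQx.1
    have hfrac : |P.eval x| / |Q.eval x| ≤ Bp / m :=
      div_le_div₀ hBp0 hPb hm0 hQb
    have hθK : θ ^ K ≤ Real.exp (-(K * (m/M))) := by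
      have hstep : θ ≤ Real.exp (-(m/M)) := by
        have := Real.add_one_le_exp (-(m/M))
        rw [hθ]; linarith
      calc θ ^ K ≤ (Real.exp (-(m/M))) ^ K := pow_le_pow_left₀ hθ0 hstep K
        _ = Real.exp (-(K * (m/M))) := by
            rw [← Real.exp_nat_mul]; ring_nf
    have hKbig : Real.log 2 + Real.log (Bp/m + 1) + L ≤ (K:ℝ) * (m/M) := by
      have hlog2 : Real.log 2 ≤ 1 := by
        have := Real.log_le_sub_one_of_pos (by norm_num : (0:ℝ) < 2)
        linarith
      have : (M/m) * (1 + Real.log (Bp/m + 1) + L) * (m/M) ≤ (K:ℝ) * (m/M) := by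
        apply mul_le_mul_of_nonneg_right hKge (le_of_lt (div_pos hm0 hM0))
      have heq : (M/m) * (1 + Real.log (Bp/m + 1) + L) * (m/M)
          = 1 + Real.log (Bp/m + 1) + L := by
        have h0 : (M/m) * (m/M) = 1 := by
          field_simp
        calc (M/m) * (1 + Real.log (Bp/m + 1) + L) * (m/M)
            = (M/m) * (m/M) * (1 + Real.log (Bp/m + 1) + L) := by ring
          _ = 1 + Real.log (Bp/m + 1) + L := by rw [h0, one_mul]
      rw [heq] at this
      linarith
    have hfinal : Bp / m * Real.exp (-(K * (m/M))) ≤ ε / 2 := by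
      have hBm : Bp / m ≤ Bp / m + 1 := by linarith
      have hexpK : Real.exp (-(K * (m/M))) ≤ ε / (2 * (Bp/m + 1)) := by
        rw [← Real.le_log_iff_exp_le (by positivity)]
        · rw [Real.log_div (by positivity) (by positivity), Real.log_mul (by norm_num) (by positivity)]
          have hLe : Real.log ε = -L := by
            rw [hL, one_div, Real.log_inv, neg_neg]
          rw [hLe]
          linarith [hKbig]
      calc Bp / m * Real.exp (-(K * (m/M))) ≤ (Bp/m + 1) * (ε / (2 * (Bp/m + 1))) := by
            apply mul_le_mul hBm hexpK (le_of_lt (Real.exp_pos _)) (by positivity)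
        _ = ε / 2 := by field_simp
    calc |P.eval x| / |Q.eval x| * |t ^ K| ≤ (Bp / m) * θ ^ K := by
          apply mul_le_mul hfrac htK (abs_nonneg _) (by positivity)
      _ ≤ (Bp / m) * Real.exp (-(K * (m/M))) := by
          apply mul_le_mul_of_nonneg_left hθK (by positivity)
      _ ≤ ε / 2 := hfinal

abbrev RawLayer := List (List ℝ × ℝ)
noncomputable def rawStep (y : List ℝ) (layer : RawLayer) : List ℝ :=
  layer.map fun pr => ReLU (listDot pr.1 y + pr.2)
noncomputable def rawEval (layers : List RawLayer) (y : List ℝ) : List ℝ := layers.foldl rawStep y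

@[simp] lemma rawEval_nil (y : List ℝ) : rawEval [] y = y := rfl
@[simp] lemma rawEval_cons (l : RawLayer) (ls : List RawLayer) (y : List ℝ) :
    rawEval (l :: ls) y = rawEval ls (rawStep y l) := rfl
lemma rawEval_append (l1 l2 : List RawLayer) (y : List ℝ) :
    rawEval (l1 ++ l2) y = rawEval l2 (rawEval l1 y) := by simp [rawEval]

noncomputable def mid (u A B S : ℝ) : List ℝ :=
  [u, ReLU A, ReLU (A - 1/2), ReLU B, ReLU (B - 1/2), S]

noncomputable def iterL (W : ℝ) (k : ℕ) : RawLayer :=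
  [([1,0,0,0,0,0],0), ([0,2,-4,0,0,0],0), ([0,2,-4,0,0,0],-(1/2)),
   ([0,0,0,2,-4,0],0), ([0,0,0,2,-4,0],-(1/2)),
   ([0,-(2*(W^2 * (4:ℝ)⁻¹^(k+1))),4*(W^2 * (4:ℝ)⁻¹^(k+1)),
     2*(W^2 * (4:ℝ)⁻¹^(k+1)),-(4*(W^2 * (4:ℝ)⁻¹^(k+1))),1],0)]

lemma ReLU_congr {a b : ℝ} (h : a = b) : ReLU a = ReLU b := by rw [h]

lemma iterL_eval (W u A B S : ℝ) (k : ℕ) (hu : 0 ≤ u)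
    (hS : 0 ≤ S - W^2*(4:ℝ)⁻¹^(k+1)*(tent A - tent B)) :
    rawStep (mid u A B S) (iterL W k)
      = mid u (tent A) (tent B) (S - W^2*(4:ℝ)⁻¹^(k+1)*(tent A - tent B)) := by
  simp only [rawStep, iterL, mid, listDot, List.zip_cons_cons, List.zip_nil_right,
    List.zip_nil_left, List.map_cons, List.map_nil, List.sum_cons, List.sum_nil,
    List.cons.injEq, and_true, mul_zero, zero_mul, add_zero, zero_add, mul_one, one_mul]
  rw [← ReLU_of_nonneg hS]
  refine ⟨ReLU_of_nonneg hu, ?_, ?_, ?_, ?_, ?_⟩ <;>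
    (apply ReLU_congr; simp only [tent]; ring)

lemma sum_quarter (n : ℕ) : ∑ k ∈ Finset.range n, (4:ℝ)⁻¹^(k+1) = (1 - (4:ℝ)⁻¹^n)/3 := by
  induction n with
  | zero => simp
  | succ n ih => rw [Finset.sum_range_succ, ih]; ring

lemma ysum_mem {t : ℝ} (h : t ∈ Icc (0:ℝ) 1) (n : ℕ) : ysum n t ∈ Icc (0:ℝ) (1/3) := by
  constructor
  · apply Finset.sum_nonneg; intro k _
    have h1 := (tentIter_mem h (k+1)).1
    positivity
  · have hterm : ∀ k ∈ Finset.range n, (4:ℝ)⁻¹^(k+1) * tentIter (k+1) t ≤ (4:ℝ)⁻¹^(k+1) := by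
      intro k _
      have h2 := (tentIter_mem h (k+1)).2
      have := mul_le_mul_of_nonneg_left h2 (by positivity : (0:ℝ) ≤ (4:ℝ)⁻¹^(k+1))
      linarith
    have h1 : ysum n t ≤ ∑ k ∈ Finset.range n, (4:ℝ)⁻¹^(k+1) := Finset.sum_le_sum hterm
    rw [sum_quarter] at h1
    have : (0:ℝ) ≤ (4:ℝ)⁻¹^n := by positivity
    linarith

lemma ysum_succ (n : ℕ) (t : ℝ) :
    ysum (n+1) t = ysum n t + (4:ℝ)⁻¹^(n+1) * tentIter (n+1) t := Finset.sum_range_succ _ _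

lemma iterChain (W u A B : ℝ) (n : ℕ) (hu : 0 ≤ u)
    (hA : A ∈ Icc (0:ℝ) 1) (hB : B ∈ Icc (0:ℝ) 1) :
    rawEval ((List.range n).map (fun k => iterL W (k+1))) (mid u A B (W^2 + W^2/4 * (A - B)))
      = mid u (tentIter n A) (tentIter n B)
          (W^2 + W^2/4 * (A - B) - W^2/4 * (ysum n A - ysum n B)) := by
  induction n with
  | zero => simp [ysum, tentIter]
  | succ n ih =>
    rw [List.range_succ, List.map_append, rawEval_append, ih]
    simp only [List.map_cons, List.map_nil]
    have hS : 0 ≤ (W^2 + W^2/4 * (A - B) - W^2/4 * (ysum n A - ysum n B))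
        - W^2*(4:ℝ)⁻¹^(n+1+1)*(tent (tentIter n A) - tent (tentIter n B)) := by
      have hyA := ysum_mem hA (n+1)
      have hyB := ysum_mem hB (n+1)
      have hrw : W^2*(4:ℝ)⁻¹^(n+1+1)*(tent (tentIter n A) - tent (tentIter n B))
          = W^2/4 * ((ysum (n+1) A - ysum n A) - (ysum (n+1) B - ysum n B)) := by
        rw [ysum_succ, ysum_succ]
        show W ^ 2 * (4:ℝ)⁻¹ ^ (n + 1 + 1) * (tentIter (n+1) A - tentIter (n+1) B) =
          W ^ 2 / 4 * (ysum n A + (4:ℝ)⁻¹ ^ (n + 1) * tentIter (n + 1) A - ysum n A -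
              (ysum n B + (4:ℝ)⁻¹ ^ (n + 1) * tentIter (n + 1) B - ysum n B))
        ring
      rw [hrw]
      have hw2 : (0:ℝ) ≤ W^2 := sq_nonneg W
      have h1 : A - B ≥ -1 := by
        have := hA.1; have := hB.2; linarith
      nlinarith [hyA.1, hyA.2, hyB.1, hyB.2]
    rw [rawEval_cons, rawEval_nil]
    rw [iterL_eval W u (tentIter n A) (tentIter n B) _ (n+1) hu hS]
    have e1 : tent (tentIter n A) = tentIter (n+1) A := rfl
    have e2 : tent (tentIter n B) = tentIter (n+1) B := rfl
    rw [e1, e2]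
    congr 1
    rw [ysum_succ, ysum_succ]
    show _ - W^2*(4:ℝ)⁻¹^(n+1+1)*(tentIter (n+1) A - tentIter (n+1) B) = _
    ring

lemma ReLU_abs (a : ℝ) : ReLU a + ReLU (-a) = |a| := by
  rcases le_or_gt 0 a with h | h
  · rw [ReLU_of_nonneg h, abs_of_nonneg h, ReLU, max_eq_right (by linarith)]
    ring
  · rw [abs_of_neg h, ReLU_of_nonneg (by linarith : (0:ℝ) ≤ -a), ReLU,
      max_eq_right (by linarith)]
    ring

noncomputable def B1L (V : ℝ) : RawLayer :=
  [([1,0],0), ([1,1], -(1+V)), ([-1,-1], 1+V), ([1,-1], V-1), ([-1,1], 1-V)]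

lemma B1_eval (V x h : ℝ) (hx1 : -1 ≤ x) :
    rawStep [x+1, h+V] (B1L V)
      = [x+1, ReLU (x+h), ReLU (-(x+h)), ReLU (x-h), ReLU (h-x)] := by
  simp only [rawStep, B1L, listDot, List.zip_cons_cons, List.zip_nil_right,
    List.zip_nil_left, List.map_cons, List.map_nil, List.sum_cons, List.sum_nil,
    List.cons.injEq, and_true, mul_zero, zero_mul, add_zero, zero_add, mul_one, one_mul]
  refine ⟨ReLU_of_nonneg (by linarith), ?_, ?_, ?_, ?_⟩ <;> (apply ReLU_congr; ring)

noncomputable def B2L (V : ℝ) : RawLayer :=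
  [([1,0,0,0,0],0),
   ([0,1/(V+1),1/(V+1),0,0],0), ([0,1/(V+1),1/(V+1),0,0],-(1/2)),
   ([0,0,0,1/(V+1),1/(V+1)],0), ([0,0,0,1/(V+1),1/(V+1)],-(1/2)),
   ([0,(V+1)/4,(V+1)/4,-((V+1)/4),-((V+1)/4)], (V+1)^2)]

lemma B2_eval (V x h : ℝ) (hx : |x| ≤ 1) (hh : |h| ≤ V - 1) (hV : 2 ≤ V) :
    rawStep [x+1, ReLU (x+h), ReLU (-(x+h)), ReLU (x-h), ReLU (h-x)] (B2L V)
      = mid (x+1) (|x+h|/(V+1)) (|x-h|/(V+1))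
          ((V+1)^2 + (V+1)^2/4 * (|x+h|/(V+1) - |x-h|/(V+1))) := by
  have hx1 : -1 ≤ x := (abs_le.mp hx).1
  have hx2 : x ≤ 1 := (abs_le.mp hx).2
  have hW0 : (0:ℝ) < V + 1 := by linarith
  have habs_s : ReLU (x+h) + ReLU (-(x+h)) = |x+h| := ReLU_abs _
  have habs_d : ReLU (x-h) + ReLU (-(x-h)) = |x-h| := ReLU_abs _
  have habs_d' : ReLU (x-h) + ReLU (h-x) = |x-h| := by
    rw [show h - x = -(x-h) by ring] ; exact habs_d
  have hsle : |x+h| ≤ V + 1 := by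
    have := abs_le.mp hh
    rw [abs_le]; constructor <;> linarith
  have hdle : |x-h| ≤ V + 1 := by
    have := abs_le.mp hh
    rw [abs_le]; constructor <;> linarith
  simp only [rawStep, B2L, mid, listDot, List.zip_cons_cons, List.zip_nil_right,
    List.zip_nil_left, List.map_cons, List.map_nil, List.sum_cons, List.sum_nil,
    List.cons.injEq, and_true, mul_zero, zero_mul, add_zero, zero_add, mul_one, one_mul]
  have hRS : (V+1)^2 + (V+1)^2/4 * (|x+h|/(V+1) - |x-h|/(V+1))
      = (V+1)^2 + (V+1)/4 * (|x+h| - |x-h|) := by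
    field_simp
  have hnn : 0 ≤ (V+1)^2 + (V+1)/4 * (|x+h| - |x-h|) := by
    have hp : (V+1)/4 * |x-h| ≤ (V+1)/4 * (V+1) :=
      mul_le_mul_of_nonneg_left hdle (by positivity)
    nlinarith [abs_nonneg (x+h), sq_nonneg (V+1)]
  rw [← habs_s, ← habs_d'] at hnn
  refine ⟨ReLU_of_nonneg (by linarith), ?_, ?_, ?_, ?_, ?_⟩
  · apply ReLU_congr; rw [← habs_s]; ring
  · apply ReLU_congr; rw [← habs_s]; ring
  · apply ReLU_congr; rw [← habs_d']; ring
  · apply ReLU_congr; rw [← habs_d']; ring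
  · rw [hRS, ← habs_s, ← habs_d', ← ReLU_of_nonneg hnn]
    apply ReLU_congr; ring

noncomputable def endL (aj V : ℝ) : RawLayer :=
  [([1,0,0,0,0,0],0), ([0,0,0,0,0,1], aj + V - (V+1)^2)]

lemma end_eval (aj V u S A B : ℝ) (hu : 0 ≤ u) (hnn : 0 ≤ S + (aj + V - (V+1)^2)) :
    rawStep (mid u A B S) (endL aj V) = [u, S + (aj + V - (V+1)^2)] := by
  simp only [rawStep, endL, mid, listDot, List.zip_cons_cons, List.zip_nil_right,
    List.zip_nil_left, List.map_cons, List.map_nil, List.sum_cons, List.sum_nil,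
    List.cons.injEq, and_true, mul_zero, zero_mul, add_zero, zero_add, mul_one, one_mul]
  exact ⟨ReLU_of_nonneg hu, ReLU_of_nonneg hnn⟩

noncomputable def blockL (aj V : ℝ) (n : ℕ) : List RawLayer :=
  B1L V :: B2L V :: ((List.range n).map (fun k => iterL (V+1) (k+1)) ++ [endL aj V])

lemma tentIter_prod_mem {t : ℝ} (h : t ∈ Icc (0:ℝ) 1) (n : ℕ) :
    tentIter n t * (1 - tentIter n t) ∈ Icc (0:ℝ) (1/4) := by
  obtain ⟨h1, h2⟩ := tentIter_mem h n
  constructor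
  · nlinarith
  · nlinarith [sq_nonneg (tentIter n t - 1/2)]

set_option maxHeartbeats 1000000 in
lemma block_eval (V : ℝ) (n : ℕ) (aj x h : ℝ) (hx : |x| ≤ 1) (hh : |h| ≤ V - 1)
    (hV : 2 ≤ V) (hsmall : (V+1)^2 * (4:ℝ)⁻¹^n ≤ 1) (haj : |aj| + |h| + 1 ≤ V) :
    ∃ e : ℝ, |e| ≤ (V+1)^2 * (4:ℝ)⁻¹^n ∧
      rawEval (blockL aj V n) [x+1, h+V] = [x+1, (aj + x*h + e) + V] := by
  have hx1 : -1 ≤ x := (abs_le.mp hx).1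
  have hW0 : (0:ℝ) < V + 1 := by linarith
  set A : ℝ := |x+h|/(V+1) with hA
  set B : ℝ := |x-h|/(V+1) with hB
  have hxx := abs_le.mp hx
  have hhh := abs_le.mp hh
  have hsle : |x+h| ≤ V + 1 := by
    rw [abs_le]; constructor <;> linarith [hxx.1, hxx.2, hhh.1, hhh.2]
  have hdle : |x-h| ≤ V + 1 := by
    rw [abs_le]; constructor <;> linarith [hxx.1, hxx.2, hhh.1, hhh.2]
  have hAmem : A ∈ Icc (0:ℝ) 1 := by
    constructor
    · rw [hA]; positivity
    · rw [hA, div_le_one hW0]; exact hsle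
  have hBmem : B ∈ Icc (0:ℝ) 1 := by
    constructor
    · rw [hB]; positivity
    · rw [hB, div_le_one hW0]; exact hdle
  have hu : (0:ℝ) ≤ x + 1 := by linarith
  -- the error term
  set γA : ℝ := tentIter n A * (1 - tentIter n A) with hγA
  set γB : ℝ := tentIter n B * (1 - tentIter n B) with hγB
  have hγAm := tentIter_prod_mem hAmem n
  have hγBm := tentIter_prod_mem hBmem n
  set e : ℝ := (V+1)^2/4 * ((4:ℝ)⁻¹^n * (γA - γB)) with he
  refine ⟨e, ?_, ?_⟩
  · rw [he, abs_mul, abs_mul]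
    have h4n : (0:ℝ) ≤ (4:ℝ)⁻¹^n := by positivity
    have hγ : |γA - γB| ≤ 1/2 := by
      rw [abs_le]
      constructor <;> [linarith [hγAm.1, hγAm.2, hγBm.1, hγBm.2];
        linarith [hγAm.1, hγAm.2, hγBm.1, hγBm.2]]
    rw [abs_of_nonneg (by positivity : (0:ℝ) ≤ (V+1)^2/4), abs_of_nonneg h4n]
    have hb : (V+1)^2/4 * (4⁻¹^n * |γA - γB|) ≤ (V+1)^2/4 * ((4:ℝ)⁻¹^n * (1/2)) := by
      apply mul_le_mul_of_nonneg_left _ (by positivity)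
      exact mul_le_mul_of_nonneg_left hγ h4n
    have hy : (0:ℝ) ≤ (V+1)^2 * (4:ℝ)⁻¹^n := by positivity
    nlinarith [hb, hy]
  · rw [blockL, rawEval_cons, rawEval_cons, B1_eval V x h hx1,
      B2_eval V x h hx hh hV, rawEval_append, iterChain (V+1) (x+1) A B n hu hAmem hBmem,
      rawEval_cons, rawEval_nil]
    have hyarA := yarotsky hAmem n
    have hyarB := yarotsky hBmem n
    have hSn : (V+1)^2 + (V+1)^2/4 * (A - B) - (V+1)^2/4 * (ysum n A - ysum n B)
        = (aj + x*h + e + V) + (-(aj + V - (V+1)^2)) := by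
      have hAB2 : (V+1)^2/4 * (A^2 - B^2) = x * h := by
        rw [hA, hB, div_pow, div_pow, sq_abs, sq_abs]
        field_simp
        ring
      have hrw : (V+1)^2 + (V+1)^2/4 * (A - B) - (V+1)^2/4 * (ysum n A - ysum n B)
          = (V+1)^2 + (V+1)^2/4 * ((A - ysum n A) - (B - ysum n B)) := by ring
      rw [hrw, hyarA, hyarB, ← hγA, ← hγB]
      rw [show (V+1)^2/4 * (A ^ 2 + (4:ℝ)⁻¹^n * γA - (B ^ 2 + (4:ℝ)⁻¹^n * γB))
          = (V+1)^2/4 * (A^2 - B^2) + e by rw [he]; ring, hAB2]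
      ring
    rw [end_eval aj V (x+1) _ (tentIter n A) (tentIter n B) hu]
    · rw [hSn]
      congr 2
      ring
    · rw [hSn]
      have hxh : |x * h| ≤ |h| := by
        rw [abs_mul]
        nlinarith [abs_nonneg h, abs_nonneg x]
      have hel : |e| ≤ 1 := by
        rw [he]
        have h4n : (0:ℝ) ≤ (4:ℝ)⁻¹^n := by positivity
        have : |(V+1)^2/4 * ((4:ℝ)⁻¹^n * (γA - γB))| ≤ (V+1)^2 * (4:ℝ)⁻¹^n := by
          rw [abs_mul, abs_mul, abs_of_nonneg (by positivity : (0:ℝ) ≤ (V+1)^2/4),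
            abs_of_nonneg h4n]
          have hγ : |γA - γB| ≤ 1/2 := by
            rw [abs_le]
            constructor <;> linarith [hγAm.1, hγAm.2, hγBm.1, hγBm.2]
          have hb : (V+1)^2/4 * ((4:ℝ)⁻¹^n * |γA - γB|) ≤ (V+1)^2/4 * ((4:ℝ)⁻¹^n * (1/2)) := by
            apply mul_le_mul_of_nonneg_left _ (by positivity)
            exact mul_le_mul_of_nonneg_left hγ h4n
          have hy : (0:ℝ) ≤ (V+1)^2 * (4:ℝ)⁻¹^n := by positivity
          nlinarith [hb, hy]
        linarith [this.trans hsmall]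
      have hxh1 : -|h| ≤ x*h := by
        have := neg_abs_le (x*h); linarith
      have hel1 : -(1:ℝ) ≤ e := by
        have := neg_abs_le e; linarith
      have haj1 : -|aj| ≤ aj := neg_abs_le aj
      linarith

noncomputable def initL (V : ℝ) : RawLayer := [([1],1), ([0], V)]

lemma init_eval (V x : ℝ) (hx1 : -1 ≤ x) (hV : 0 ≤ V) :
    rawStep [x] (initL V) = [x+1, 0+V] := by
  simp only [rawStep, initL, listDot, List.zip_cons_cons, List.zip_nil_right,
    List.zip_nil_left, List.map_cons, List.map_nil, List.sum_cons, List.sum_nil,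
    List.cons.injEq, and_true, mul_zero, zero_mul, add_zero, zero_add, mul_one, one_mul]
  constructor
  · exact ReLU_of_nonneg (by linarith)
  · exact ReLU_of_nonneg hV

noncomputable def clipL (V : ℝ) : RawLayer := [([0,1], 1-V), ([0,1], -(1+V))]

lemma clip_eval (V u v : ℝ) :
    rawStep [u, v] (clipL V) = [ReLU (v - V + 1), ReLU (v - V - 1)] := by
  simp only [rawStep, clipL, listDot, List.zip_cons_cons, List.zip_nil_right,
    List.zip_nil_left, List.map_cons, List.map_nil, List.sum_cons, List.sum_nil,
    List.cons.injEq, and_true, mul_zero, zero_mul, add_zero, zero_add, mul_one, one_mul]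
  constructor <;> (apply ReLU_congr; ring)

lemma clip_prop (y r : ℝ) (hr : r ∈ Icc (-1:ℝ) 1) :
    (ReLU (y+1) - ReLU (y-1) - 1) ∈ Icc (-1:ℝ) 1 ∧
    |r - (ReLU (y+1) - ReLU (y-1) - 1)| ≤ |r - y| := by
  obtain ⟨hr1, hr2⟩ := hr
  rcases le_or_gt y (-1) with hc | hc
  · have h1 : ReLU (y+1) = 0 := by rw [ReLU, max_eq_right]; linarith
    have h2 : ReLU (y-1) = 0 := by rw [ReLU, max_eq_right]; linarith
    rw [h1, h2]
    have hv : (0:ℝ) - 0 - 1 = -1 := by ring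
    rw [hv]
    refine ⟨⟨le_refl _, by norm_num⟩, ?_⟩
    rw [abs_of_nonneg (show (0:ℝ) ≤ r - -1 by linarith),
      abs_of_nonneg (show (0:ℝ) ≤ r - y by linarith)]
    linarith
  · rcases le_or_gt y 1 with hc2 | hc2
    · have h1 : ReLU (y+1) = y+1 := ReLU_of_nonneg (by linarith)
      have h2 : ReLU (y-1) = 0 := by rw [ReLU, max_eq_right]; linarith
      rw [h1, h2]
      constructor
      · constructor <;> [linarith; linarith]
      · apply le_of_eq; congr 1; ring
    · have h1 : ReLU (y+1) = y+1 := ReLU_of_nonneg (by linarith)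
      have h2 : ReLU (y-1) = y-1 := ReLU_of_nonneg (by linarith)
      rw [h1, h2]
      have he : y + 1 - (y - 1) - 1 = 1 := by ring
      rw [he]
      refine ⟨⟨by linarith, le_refl 1⟩, ?_⟩
      rw [abs_of_nonpos (by linarith), abs_of_nonpos (by linarith)]
      linarith

noncomputable def horner (a : List ℝ) (x : ℝ) : ℝ := a.foldr (fun c acc => c + x * acc) 0

lemma horner_nil (x : ℝ) : horner [] x = 0 := rfl
lemma horner_cons (c : ℝ) (t : List ℝ) (x : ℝ) :
    horner (c :: t) x = c + x * horner t x := rfl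

lemma horner_abs_le (a : List ℝ) (x : ℝ) (hx : |x| ≤ 1) :
    |horner a x| ≤ (a.map abs).sum := by
  induction a with
  | nil => simp [horner_nil]
  | cons c t ih =>
    rw [horner_cons, List.map_cons, List.sum_cons]
    calc |c + x * horner t x| ≤ |c| + |x * horner t x| := abs_add_le _ _
      _ ≤ |c| + (t.map abs).sum := by
          rw [abs_mul]
          have : |x| * |horner t x| ≤ 1 * |horner t x| :=
            mul_le_mul_of_nonneg_right hx (abs_nonneg _)
          rw [one_mul] at this
          linarith [this.trans ih]

lemma map_abs_sum_nonneg (a : List ℝ) : 0 ≤ (a.map abs).sum := by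
  induction a with
  | nil => simp
  | cons c t ih => rw [List.map_cons, List.sum_cons]; have := abs_nonneg c; linarith

noncomputable def hornerLayers (V : ℝ) (n : ℕ) : List ℝ → List RawLayer
  | [] => []
  | c :: rest => hornerLayers V n rest ++ blockL c V n

set_option maxHeartbeats 1000000 in
lemma horner_net (V : ℝ) (n : ℕ) (hV : 2 ≤ V) (hsmall : (V+1)^2 * (4:ℝ)⁻¹^n ≤ 1)
    (x : ℝ) (hx : |x| ≤ 1) :
    ∀ a : List ℝ, (a.map abs).sum + 2 ≤ V → (a.length : ℝ) * ((V+1)^2 * (4:ℝ)⁻¹^n) ≤ 1 →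
    ∃ hh : ℝ, |hh - horner a x| ≤ (a.length : ℝ) * ((V+1)^2 * (4:ℝ)⁻¹^n) ∧
      rawEval (hornerLayers V n a) [x+1, 0+V] = [x+1, hh+V] := by
  intro a
  induction a with
  | nil =>
    intro _ _
    exact ⟨0, by simp [horner_nil], by simp [hornerLayers]⟩
  | cons c rest ih =>
    intro hsum hlen
    have hδ0 : (0:ℝ) ≤ (V+1)^2 * (4:ℝ)⁻¹^n := by positivity
    have habs_c : 0 ≤ |c| := abs_nonneg c
    have hsum_rest : (rest.map abs).sum + 2 ≤ V := by
      rw [List.map_cons, List.sum_cons] at hsum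
      linarith
    have hlen_rest : (rest.length : ℝ) * ((V+1)^2 * (4:ℝ)⁻¹^n) ≤ 1 := by
      have : (rest.length : ℝ) ≤ ((c :: rest).length : ℝ) := by
        simp [List.length_cons]
      nlinarith [hδ0]
    obtain ⟨hh, hherr, hheval⟩ := ih hsum_rest hlen_rest
    have hhab : |hh| ≤ (rest.map abs).sum + 1 := by
      have h1 : |horner rest x| ≤ (rest.map abs).sum := horner_abs_le rest x hx
      have h2 : |hh| ≤ |horner rest x| + |hh - horner rest x| := by
        have := abs_add_le (horner rest x) (hh - horner rest x)
        simpa using this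
      linarith [hherr.trans hlen_rest]
    have hhVm1 : |hh| ≤ V - 1 := by linarith
    have hajc : |c| + |hh| + 1 ≤ V := by
      rw [List.map_cons, List.sum_cons] at hsum
      linarith
    obtain ⟨e, herr, heval⟩ := block_eval V n c x hh hx hhVm1 hV hsmall hajc
    refine ⟨c + x * hh + e, ?_, ?_⟩
    · rw [horner_cons]
      have h1 : c + x * hh + e - (c + x * horner rest x)
          = x * (hh - horner rest x) + e := by ring
      rw [h1]
      calc |x * (hh - horner rest x) + e| ≤ |x * (hh - horner rest x)| + |e| := abs_add_le _ _
        _ ≤ |hh - horner rest x| + |e| := by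
            rw [abs_mul]
            have := mul_le_mul_of_nonneg_right hx (abs_nonneg (hh - horner rest x))
            rw [one_mul] at this
            linarith
        _ ≤ (rest.length : ℝ) * ((V+1)^2 * (4:ℝ)⁻¹^n) + (V+1)^2 * (4:ℝ)⁻¹^n :=
            add_le_add hherr herr
        _ = ((c :: rest).length : ℝ) * ((V+1)^2 * (4:ℝ)⁻¹^n) := by
            simp [List.length_cons]
            ring
    · show rawEval (hornerLayers V n rest ++ blockL c V n) [x+1, 0+V] = _
      rw [rawEval_append, hheval, heval]

noncomputable def toNet (layers : List RawLayer) (w : List ℝ) (c : ℝ) : NeuralNet 1 :=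
  ⟨layers.map (List.map fun pr => ⟨ReLU, pr.1, pr.2⟩), w, c⟩

lemma toNet_isReLU (layers : List RawLayer) (w : List ℝ) (c : ℝ) :
    (toNet layers w c).IsReLU := by
  intro layer hl n hn
  simp only [toNet, List.mem_map] at hl
  obtain ⟨raw, _, rfl⟩ := hl
  simp only [List.mem_map] at hn
  obtain ⟨pr, _, rfl⟩ := hn
  rfl

lemma toNet_eval (layers : List RawLayer) (w : List ℝ) (c : ℝ) (x : Fin 1 → ℝ) :
    (toNet layers w c).eval x = listDot w (rawEval layers (List.ofFn x)) + c := by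
  simp only [NeuralNet.eval, toNet, rawEval, rawStep, List.foldl_map, List.map_map]
  rfl

lemma toNet_size (layers : List RawLayer) (w : List ℝ) (c : ℝ) :
    (toNet layers w c).size = (layers.map List.length).sum := by
  simp only [NeuralNet.size, toNet, List.map_map]
  congr 1
  apply List.map_congr_left
  intro raw _
  simp [Function.comp, List.length_map]

-- final assembly pieces (to be appended before the main theorem)

lemma blockL_size (aj V : ℝ) (n : ℕ) :
    ((blockL aj V n).map List.length).sum = 6*n + 13 := by
  rw [blockL]
  simp only [List.map_cons, List.map_append, List.sum_cons, List.sum_append, List.map_map]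
  have h1 : (B1L V).length = 5 := rfl
  have h2 : (B2L V).length = 6 := rfl
  have h4 : ((endL aj V)).length = 2 := rfl
  have h3 : ((List.range n).map (List.length ∘ fun k => iterL (V+1) (k+1))).sum = 6*n := by
    induction n with
    | zero => simp
    | succ n ih =>
      rw [List.range_succ, List.map_append, List.sum_append, ih]
      simp only [List.map_cons, List.map_nil, List.sum_cons, List.sum_nil]
      have : (List.length ∘ fun k => iterL (V+1) (k+1)) n = 6 := rfl
      rw [this]
      ring
  rw [h1, h2, h4, h3]
  simp
  ring

lemma hornerLayers_size (V : ℝ) (n : ℕ) (a : List ℝ) :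
    ((hornerLayers V n a).map List.length).sum = a.length * (6*n + 13) := by
  induction a with
  | nil => simp [hornerLayers]
  | cons c rest ih =>
    show ((hornerLayers V n rest ++ blockL c V n).map List.length).sum = _
    rw [List.map_append, List.sum_append, ih, blockL_size]
    simp [List.length_cons]
    ring

lemma horner_append (l : List ℝ) (cc x : ℝ) :
    horner (l ++ [cc]) x = horner l x + cc * x^l.length := by
  induction l with
  | nil => simp [horner_cons, horner_nil]
  | cons d t ih =>
    rw [List.cons_append, horner_cons, ih, horner_cons]
    simp only [List.length_cons]
    ring

lemma horner_range (f : ℕ → ℝ) (N : ℕ) (x : ℝ) :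
    horner ((List.range N).map f) x = ∑ i ∈ Finset.range N, f i * x^i := by
  induction N with
  | zero => simp [horner_nil]
  | succ N ih =>
    rw [List.range_succ, List.map_append, List.map_cons, List.map_nil,
      horner_append, ih, Finset.sum_range_succ, List.length_map, List.length_range]

lemma abs_sum_range (f : ℕ → ℝ) (N : ℕ) :
    (((List.range N).map f).map abs).sum = ∑ i ∈ Finset.range N, |f i| := by
  induction N with
  | zero => simp
  | succ N ih =>
    rw [List.range_succ, List.map_append, List.map_append, List.sum_append, ih,
      Finset.sum_range_succ]
    simp

lemma exists_n {y : ℝ} (hy : 1 ≤ y) :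
    ∃ n : ℕ, (4:ℝ)⁻¹^n * y ≤ 1 ∧ (n:ℝ) ≤ Real.log y + 2 := by
  have hlog4 : 1 ≤ Real.log 4 := by
    rw [Real.le_log_iff_exp_le (by norm_num)]
    have := Real.exp_one_lt_d9
    linarith
  have hy0 : 0 < y := by linarith
  have hly : 0 ≤ Real.log y := Real.log_nonneg hy
  refine ⟨⌈Real.log y / Real.log 4⌉₊, ?_, ?_⟩
  · have hn : Real.log y / Real.log 4 ≤ (⌈Real.log y / Real.log 4⌉₊ : ℝ) := Nat.le_ceil _
    have hstep : Real.log y ≤ (⌈Real.log y / Real.log 4⌉₊ : ℝ) * Real.log 4 := by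
      rw [div_le_iff₀ (by linarith)] at hn
      linarith
    have hpow : y ≤ 4^(⌈Real.log y / Real.log 4⌉₊ : ℕ) := by
      calc y = Real.exp (Real.log y) := (Real.exp_log hy0).symm
        _ ≤ Real.exp ((⌈Real.log y / Real.log 4⌉₊ : ℝ) * Real.log 4) :=
            Real.exp_le_exp.mpr hstep
        _ = (Real.exp (Real.log 4))^(⌈Real.log y / Real.log 4⌉₊ : ℕ) := by
            rw [← Real.exp_nat_mul]
        _ = 4^(⌈Real.log y / Real.log 4⌉₊ : ℕ) := by
            rw [Real.exp_log (by norm_num)]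
    rw [inv_pow, inv_mul_le_iff₀ (by positivity), mul_one]
    exact hpow
  · have h1 : (⌈Real.log y / Real.log 4⌉₊ : ℝ) ≤ Real.log y / Real.log 4 + 1 :=
      (Nat.ceil_lt_add_one (by positivity)).le
    have h2 : Real.log y / Real.log 4 ≤ Real.log y := div_le_self hly hlog4
    linarith

lemma size_arith {c₁ c₃ L s n len : ℝ} (hL : 0 < L) (hc₁ : 0 < c₁) (hc₃ : 0 < c₃)
    (hlen : len ≤ c₁*(1+L)) (hn : n ≤ c₃*(1+L)) (hlen0 : 0 ≤ len) (hn0 : 0 ≤ n)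
    (hs : s ≤ 4 + len*(6*n+13)) :
    s ≤ (4 + c₁*(6*c₃+13)) * (1+L)^3 := by
  have ht : (1:ℝ) ≤ 1 + L := by linarith
  have h6 : 6*n+13 ≤ 6*(c₃*(1+L))+13 := by linarith
  have hmul : len*(6*n+13) ≤ (c₁*(1+L))*(6*(c₃*(1+L))+13) :=
    mul_le_mul hlen h6 (by linarith) (by positivity)
  have h1 : (1:ℝ) ≤ (1+L)^3 := one_le_pow₀ ht
  have h2 : (1+L)^2 ≤ (1+L)^3 := pow_le_pow_right₀ ht (by norm_num)
  have h3 : (1+L) ≤ (1+L)^3 := le_self_pow₀ ht (by norm_num)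
  nlinarith [mul_le_mul_of_nonneg_left h2 (by positivity : (0:ℝ) ≤ 6*c₁*c₃),
    mul_le_mul_of_nonneg_left h3 (by positivity : (0:ℝ) ≤ 13*c₁)]

set_option maxHeartbeats 2000000 in
/-- Every rational function `R : [-1,1] → [-1,1]` can be approximated to within any
`0 < ε < 1` by a ReLU network `f : [-1,1] → [-1,1]` of size at most `C·(1 + log(1/ε))³`,
where `C` depends only on `R`. -/
theorem relu_network_approximates_rational (p q : ℕ) (R : ℝ → ℝ)
    (hR : IsRationalOn R p q (Set.Icc (-1) 1))
    (hmap : ∀ x ∈ Set.Icc (-1 : ℝ) 1, R x ∈ Set.Icc (-1 : ℝ) 1) :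
    ∃ C > (0 : ℝ), ∀ ε : ℝ, 0 < ε → ε < 1 →
      ∃ f : NeuralNet 1, f.IsReLU ∧
        (∀ x ∈ Set.Icc (-1 : ℝ) 1, f.eval (fun _ => x) ∈ Set.Icc (-1 : ℝ) 1) ∧
        (f.size : ℝ) ≤ C * (1 + Real.log (1 / ε)) ^ 3 ∧
        ∀ x ∈ Set.Icc (-1 : ℝ) 1, |R x - f.eval (fun _ => x)| ≤ ε := by
  obtain ⟨c₁, c₂, hc₁0, hc₂0, happrox⟩ := rat_to_poly p q R hR
  set c₃ : ℝ := c₁ + 2*c₂ + 8 with hc₃def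
  have hc₃0 : 0 < c₃ := by positivity
  refine ⟨4 + c₁*(6*c₃+13), by positivity, ?_⟩
  intro ε hε0 hε1
  set L : ℝ := Real.log (1/ε) with hLdef
  have hL0 : 0 < L := by
    rw [hLdef]; apply Real.log_pos
    rw [one_div]
    exact (one_lt_inv₀ hε0).mpr hε1
  obtain ⟨g, hdeg, hl1, happ⟩ := happrox ε hε0 hε1
  set a : List ℝ := (List.range (g.natDegree+1)).map (fun i => g.coeff i) with hadef
  have hlen : a.length = g.natDegree + 1 := by
    rw [hadef, List.length_map, List.length_range]
  have hlenR : (a.length : ℝ) ≤ c₁*(1+L) := by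
    rw [hlen]; push_cast
    exact_mod_cast hdeg
  have hlen1 : 1 ≤ a.length := by omega
  have hlen1R : (1:ℝ) ≤ (a.length : ℝ) := by exact_mod_cast hlen1
  have hsum_eq : (a.map abs).sum = l1 g := by
    rw [hadef, abs_sum_range]
    rfl
  have hhorner : ∀ x : ℝ, horner a x = g.eval x := by
    intro x
    rw [hadef, horner_range, g.eval_eq_sum_range]
  set V : ℝ := (a.map abs).sum + 2 with hVdef
  have hsum0 : 0 ≤ (a.map abs).sum := map_abs_sum_nonneg a
  have hV : 2 ≤ V := by rw [hVdef]; linarith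
  have hV1 : (3:ℝ) ≤ V + 1 := by linarith
  -- choose n
  set y : ℝ := 2 * a.length * (V+1)^2 / ε with hydef
  have hy1 : 1 ≤ y := by
    rw [hydef, le_div_iff₀ hε0]
    have h9 : (9:ℝ) ≤ (V+1)^2 := by nlinarith
    nlinarith
  obtain ⟨n, hn1, hn2⟩ := exists_n hy1
  have hδhalf : (a.length : ℝ) * ((V+1)^2 * (4:ℝ)⁻¹^n) ≤ ε/2 := by
    have hmul := mul_le_mul_of_nonneg_right hn1 (le_of_lt (half_pos hε0))
    rw [one_mul] at hmul
    have heq : (4:ℝ)⁻¹^n * y * (ε/2) = (a.length : ℝ) * ((V+1)^2 * (4:ℝ)⁻¹^n) := by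
      rw [hydef]
      field_simp
    rw [heq] at hmul
    exact hmul
  have hδ0 : (0:ℝ) ≤ (V+1)^2 * (4:ℝ)⁻¹^n := by positivity
  have hsmall : (V+1)^2 * (4:ℝ)⁻¹^n ≤ 1 := by
    have h1 : (V+1)^2 * (4:ℝ)⁻¹^n ≤ (a.length : ℝ) * ((V+1)^2 * (4:ℝ)⁻¹^n) := by
      nlinarith
    linarith
  have hlencond : (a.length : ℝ) * ((V+1)^2 * (4:ℝ)⁻¹^n) ≤ 1 := by linarith
  -- the network
  refine ⟨toNet (initL V :: (hornerLayers V n a ++ [clipL V])) [1,-1] (-1), ?_, ?_, ?_, ?_⟩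
  · exact toNet_isReLU _ _ _
  · -- range
    intro x hx
    have hxabs : |x| ≤ 1 := abs_le.mpr ⟨hx.1, hx.2⟩
    obtain ⟨hh, hherr, hheval⟩ := horner_net V n hV hsmall x hxabs a le_rfl hlencond
    have heval : (toNet (initL V :: (hornerLayers V n a ++ [clipL V])) [1,-1] (-1)).eval
        (fun _ => x) = ReLU (hh + 1) - ReLU (hh - 1) - 1 := by
      rw [toNet_eval]
      have hofn : List.ofFn (fun _ : Fin 1 => x) = [x] := by simp
      rw [hofn, rawEval_cons, init_eval V x hx.1 (by linarith), rawEval_append, hheval,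
        rawEval_cons, rawEval_nil, clip_eval,
        show hh + V - V + 1 = hh + 1 by ring, show hh + V - V - 1 = hh - 1 by ring]
      simp [listDot]
      ring
    rw [heval]
    exact (clip_prop hh (R x) (hmap x hx)).1
  · -- size
    rw [toNet_size]
    simp only [List.map_cons, List.sum_cons, List.map_append, List.sum_append,
      hornerLayers_size, List.map_nil, List.sum_nil]
    have e1 : List.length (initL V) = 2 := rfl
    have e2 : List.length (clipL V) = 2 := rfl
    rw [e1, e2]
    push_cast
    -- bound n
    have hlogy : Real.log y ≤ (c₁ + 2*c₂ + 6) * (1 + L) := by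
      have hlog2 : Real.log 2 ≤ 1 := by
        have := Real.log_le_sub_one_of_pos (by norm_num : (0:ℝ) < 2)
        linarith
      have hloglen : Real.log (a.length : ℝ) ≤ c₁ * (1+L) := by
        have h1 : Real.log (a.length : ℝ) ≤ (a.length : ℝ) - 1 :=
          Real.log_le_sub_one_of_pos (by linarith)
        linarith
      have hlogV : Real.log (V+1) ≤ 2 + c₂*(1+L) := by
        have hVle : V + 1 ≤ 4 * Real.exp (c₂*(1+L)) := by
          have he1 : 1 ≤ Real.exp (c₂*(1+L)) := by
            rw [Real.one_le_exp_iff]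
            positivity
          have hVeq : V + 1 = (a.map abs).sum + 3 := by rw [hVdef]; ring
          rw [hVeq, hsum_eq]
          have := hl1
          rw [← hLdef] at this
          linarith
        calc Real.log (V+1) ≤ Real.log (4 * Real.exp (c₂*(1+L))) :=
              Real.log_le_log (by linarith) hVle
          _ = Real.log 4 + c₂*(1+L) := by
              rw [Real.log_mul (by norm_num) (by positivity), Real.log_exp]
          _ ≤ 2 + c₂*(1+L) := by
              have h4 : Real.log 4 = 2 * Real.log 2 := by
                rw [show (4:ℝ) = 2^2 by norm_num, Real.log_pow]
                push_cast; ring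
              linarith
      have hyeq : Real.log y = Real.log 2 + Real.log (a.length : ℝ)
          + 2 * Real.log (V+1) + L := by
        rw [hydef, Real.log_div (by positivity) (ne_of_gt hε0),
          Real.log_mul (by positivity) (by positivity),
          Real.log_mul (by norm_num) (by positivity),
          Real.log_pow, hLdef, one_div, Real.log_inv]
        push_cast
        ring
      rw [hyeq]
      nlinarith [hL0]
    have hnle : (n:ℝ) ≤ c₃ * (1+L) := by
      rw [hc₃def]
      nlinarith [hL0]
    refine size_arith hL0 hc₁0 hc₃0 hlenR hnle (by positivity) (Nat.cast_nonneg n) ?_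
    exact le_of_eq (by ring)
  · -- approximation
    intro x hx
    have hxabs : |x| ≤ 1 := abs_le.mpr ⟨hx.1, hx.2⟩
    obtain ⟨hh, hherr, hheval⟩ := horner_net V n hV hsmall x hxabs a le_rfl hlencond
    have heval : (toNet (initL V :: (hornerLayers V n a ++ [clipL V])) [1,-1] (-1)).eval
        (fun _ => x) = ReLU (hh + 1) - ReLU (hh - 1) - 1 := by
      rw [toNet_eval]
      have hofn : List.ofFn (fun _ : Fin 1 => x) = [x] := by simp
      rw [hofn, rawEval_cons, init_eval V x hx.1 (by linarith), rawEval_append, hheval,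
        rawEval_cons, rawEval_nil, clip_eval,
        show hh + V - V + 1 = hh + 1 by ring, show hh + V - V - 1 = hh - 1 by ring]
      simp [listDot]
      ring
    rw [heval]
    have hclip := (clip_prop hh (R x) (hmap x hx)).2
    refine hclip.trans ?_
    have h1 : |R x - hh| ≤ |R x - g.eval x| + |g.eval x - hh| := by
      have := abs_add_le (R x - g.eval x) (g.eval x - hh)
      simpa using this
    have h2 : |g.eval x - hh| ≤ ε/2 := by
      rw [← hhorner x, abs_sub_comm]
      exact hherr.trans hδhalf
    have h3 := happ x hx
    linarith
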